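/- With F_n and F_∞(X) := ∫_0^1 c(t)·X(t)·X'(t) dt defined for 1-Lipschitz X vanishing at 1, there is a constant C such that sup_X |F_∞(X) − F_n(X)| ≤ C·2^{-2n} for all n; consequently F_∞ is continuous on the set X of 1-Lipschitz functions vanishing at 1 with the sup norm. -/

import Mathlib

open MeasureTheory Set Filter

noncomputable def tn (n : ℕ) : ℝ := 1 - 1 / 2 ^ n
noncomputable def sn (n : ℕ) : ℝ := (tn n + 3 * tn (n + 1)) / 4
noncomputable def c (x : ℝ) : ℝ :=
  ∑' n : ℕ, ((Ico (tn n) (sn n)).indicator (fun _ => (1 : ℝ)) x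
    + 6 * (Ico (sn n) (tn (n + 1))).indicator (fun _ => (1 : ℝ)) x)

noncomputable def cterm (n : ℕ) (x : ℝ) : ℝ :=
  (Ico (tn n) (sn n)).indicator (fun _ => (1 : ℝ)) x
    + 6 * (Ico (sn n) (tn (n + 1))).indicator (fun _ => (1 : ℝ)) x

lemma c_def (x : ℝ) : c x = ∑' n, cterm n x := rfl

lemma tn_strictMono : StrictMono tn := by
  intro a b h
  unfold tn
  have : (1:ℝ)/2^b < 1/2^a := by
    apply div_lt_div_of_pos_left one_pos (by positivity)
    exact pow_lt_pow_right₀ one_lt_two h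
  linarith

lemma tn_zero : tn 0 = 0 := by simp [tn]

lemma tn_nonneg (n : ℕ) : 0 ≤ tn n := by
  rw [← tn_zero]
  exact tn_strictMono.monotone (Nat.zero_le n)

lemma tn_lt_one (n : ℕ) : tn n < 1 := by
  unfold tn; have : (0:ℝ) < 1/2^n := by positivity
  linarith

lemma tn_lt_sn (n : ℕ) : tn n < sn n := by
  have := tn_strictMono (Nat.lt_succ_self n)
  unfold sn; linarith

lemma sn_lt_tn (n : ℕ) : sn n < tn (n + 1) := by
  have := tn_strictMono (Nat.lt_succ_self n)
  unfold sn; linarith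

lemma cterm_eq_zero {n : ℕ} {x : ℝ} (hx : x ∉ Ico (tn n) (tn (n + 1))) : cterm n x = 0 := by
  unfold cterm
  rw [indicator_of_notMem, indicator_of_notMem, mul_zero, add_zero]
  · intro ⟨h1, h2⟩; exact hx ⟨le_trans (tn_lt_sn n).le h1, h2⟩
  · intro ⟨h1, h2⟩; exact hx ⟨h1, lt_trans h2 (sn_lt_tn n)⟩

lemma exists_m {x : ℝ} (h0 : 0 ≤ x) (h1 : x < 1) : ∃ m, tn m ≤ x ∧ x < tn (m + 1) := by
  have hP : ∃ n, x < tn n := by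
    obtain ⟨n, hn⟩ := exists_pow_lt_of_lt_one (by linarith : (0:ℝ) < 1 - x)
      (by norm_num : (1:ℝ)/2 < 1)
    refine ⟨n, ?_⟩
    have : (1:ℝ)/2^n < 1 - x := by
      rwa [div_pow, one_pow] at hn
    unfold tn; linarith
  classical
  have hN : Nat.find hP ≠ 0 := by
    intro h
    have := Nat.find_spec hP
    rw [h, tn_zero] at this; linarith
  refine ⟨Nat.find hP - 1, ?_, ?_⟩
  · have := Nat.find_min hP (m := Nat.find hP - 1) (Nat.sub_lt (Nat.pos_of_ne_zero hN) one_pos)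
    linarith [not_lt.mp this]
  · rw [Nat.sub_add_cancel (Nat.one_le_iff_ne_zero.mpr hN)]
    exact Nat.find_spec hP

lemma cterm_unique {m n : ℕ} {x : ℝ} (hx : x ∈ Ico (tn m) (tn (m + 1))) (hnm : n ≠ m) :
    cterm n x = 0 := by
  apply cterm_eq_zero
  rcases lt_or_gt_of_ne hnm with h | h
  · intro ⟨_, h2⟩
    exact absurd (lt_of_lt_of_le h2 (tn_strictMono.monotone h)) (not_lt.mpr hx.1)
  · intro ⟨h1, _⟩
    exact absurd (lt_of_lt_of_le hx.2 (tn_strictMono.monotone h)) (not_lt.mpr h1)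

lemma summable_cterm (x : ℝ) : Summable (fun n => cterm n x) := by
  by_cases h : 0 ≤ x ∧ x < 1
  · obtain ⟨m, hm⟩ := exists_m h.1 h.2
    exact summable_of_ne_finset_zero (s := {m}) fun n hn =>
      cterm_unique hm (by simpa using hn)
  · apply summable_of_ne_finset_zero (s := ∅)
    intro n _
    apply cterm_eq_zero
    intro ⟨h1, h2⟩
    rcases not_and_or.mp h with h' | h'
    · exact h' (le_trans (tn_nonneg n) h1)
    · exact h' (lt_trans h2 (tn_lt_one _))

lemma c_hasSum (x : ℝ) : HasSum (fun n => cterm n x) (c x) := (summable_cterm x).hasSum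

lemma c_eq_one {m : ℕ} {x : ℝ} (hx : x ∈ Ico (tn m) (sn m)) : c x = 1 := by
  have hx' : x ∈ Ico (tn m) (tn (m + 1)) := ⟨hx.1, lt_trans hx.2 (sn_lt_tn m)⟩
  rw [c_def, tsum_eq_single m (fun n hn => cterm_unique hx' hn)]
  unfold cterm
  rw [indicator_of_mem hx, indicator_of_notMem, mul_zero, add_zero]
  intro ⟨h1, _⟩
  exact absurd hx.2 (not_lt.mpr h1)

lemma c_eq_six {m : ℕ} {x : ℝ} (hx : x ∈ Ico (sn m) (tn (m + 1))) : c x = 6 := by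
  have hx' : x ∈ Ico (tn m) (tn (m + 1)) := ⟨le_trans (tn_lt_sn m).le hx.1, hx.2⟩
  rw [c_def, tsum_eq_single m (fun n hn => cterm_unique hx' hn)]
  unfold cterm
  rw [indicator_of_mem hx, indicator_of_notMem, mul_one, zero_add]
  intro ⟨_, h2⟩
  exact absurd hx.1 (not_le.mpr h2)

lemma c_eq_zero {x : ℝ} (hx : x < 0 ∨ 1 ≤ x) : c x = 0 := by
  rw [c_def]
  convert tsum_zero with n
  apply cterm_eq_zero
  intro ⟨h1, h2⟩
  rcases hx with h | h
  · exact absurd (le_trans (tn_nonneg n) h1) (not_le.mpr h)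
  · exact absurd (lt_trans h2 (tn_lt_one _)) (not_lt.mpr h)

lemma c_nonneg (x : ℝ) : 0 ≤ c x := by
  by_cases h : 0 ≤ x ∧ x < 1
  · obtain ⟨m, hm⟩ := exists_m h.1 h.2
    by_cases h2 : x < sn m
    · rw [c_eq_one ⟨hm.1, h2⟩]; norm_num
    · rw [c_eq_six ⟨not_lt.mp h2, hm.2⟩]; norm_num
  · rw [c_eq_zero]
    rcases not_and_or.mp h with h' | h'
    · exact Or.inl (not_le.mp h')
    · exact Or.inr (not_lt.mp h')

lemma c_le_six (x : ℝ) : c x ≤ 6 := by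
  by_cases h : 0 ≤ x ∧ x < 1
  · obtain ⟨m, hm⟩ := exists_m h.1 h.2
    by_cases h2 : x < sn m
    · rw [c_eq_one ⟨hm.1, h2⟩]; norm_num
    · rw [c_eq_six ⟨not_lt.mp h2, hm.2⟩]
  · rw [c_eq_zero]
    · norm_num
    rcases not_and_or.mp h with h' | h'
    · exact Or.inl (not_le.mp h')
    · exact Or.inr (not_lt.mp h')

lemma measurable_c : Measurable c := by
  apply measurable_of_tendsto_metrizable
    (f := fun N x => ∑ n ∈ Finset.range N, cterm n x)
  · intro N
    apply Finset.measurable_sum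
    intro n _
    exact ((measurable_const.indicator measurableSet_Ico).add
      ((measurable_const.indicator measurableSet_Ico).const_mul 6))
  · rw [tendsto_pi_nhds]
    intro x
    exact (c_hasSum x).tendsto_sum_nat
noncomputable def Finfty (X : ℝ → ℝ) : ℝ := ∫ x in (0 : ℝ)..1, c x * X x * deriv X x
noncomputable def Fn (n : ℕ) (X : ℝ → ℝ) : ℝ :=
  ∫ x in (0 : ℝ)..(tn n), c x * X x * deriv X x
lemma abs_X_le {X : ℝ → ℝ} (hX : LipschitzWith 1 X) (h1 : X 1 = 0) {x : ℝ} (hx : x ≤ 1) :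
    |X x| ≤ 1 - x := by
  have := hX.dist_le_mul x 1
  rw [h1] at this
  simp only [Real.dist_eq, NNReal.coe_one, one_mul, sub_zero] at this
  calc |X x| ≤ |x - 1| := this
  _ = 1 - x := by rw [abs_sub_comm, abs_of_nonneg (by linarith)]

lemma abs_deriv_le {X : ℝ → ℝ} (hX : LipschitzWith 1 X) (x : ℝ) : |deriv X x| ≤ 1 := by
  simpa using norm_deriv_le_of_lipschitz hX

lemma measurable_integrand {X : ℝ → ℝ} (hX : LipschitzWith 1 X) :
    Measurable (fun x => c x * X x * deriv X x) :=
  (measurable_c.mul hX.continuous.measurable).mul (measurable_deriv X)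

lemma bound_integrand {X : ℝ → ℝ} (hX : LipschitzWith 1 X) (h1 : X 1 = 0) {x : ℝ}
    (hx : x ≤ 1) : |c x * X x * deriv X x| ≤ 6 * (1 - x) := by
  rw [abs_mul, abs_mul]
  have h0 : 0 ≤ 1 - x := by linarith
  calc |c x| * |X x| * |deriv X x| ≤ 6 * (1 - x) * 1 := by
        apply mul_le_mul _ (abs_deriv_le hX x) (abs_nonneg _) (by positivity)
        exact mul_le_mul (by rw [abs_of_nonneg (c_nonneg x)]; exact c_le_six x)
          (abs_X_le hX h1 hx) (abs_nonneg _) (by norm_num)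
  _ = 6 * (1 - x) := mul_one _

lemma integrable_integrand {X : ℝ → ℝ} (hX : LipschitzWith 1 X) (h1 : X 1 = 0) {a b : ℝ}
    (ha : 0 ≤ a) (hab : a ≤ b) (hb : b ≤ 1) :
    IntervalIntegrable (fun x => c x * X x * deriv X x) volume a b := by
  rw [intervalIntegrable_iff_integrableOn_Ioc_of_le hab]
  apply Integrable.mono' (integrable_const (6 : ℝ))
    ((measurable_integrand hX).aestronglyMeasurable)
  filter_upwards [ae_restrict_mem measurableSet_Ioc] with x hx
  calc ‖c x * X x * deriv X x‖ ≤ 6 * (1 - x) := bound_integrand hX h1 (le_trans hx.2 hb)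
  _ ≤ 6 := by nlinarith [le_trans ha hx.1.le]

lemma part1 {X : ℝ → ℝ} (hX : LipschitzWith 1 X) (h1 : X 1 = 0) (n : ℕ) :
    |Finfty X - Fn n X| ≤ 3 * (2 : ℝ) ^ (-(2 * n : ℤ)) := by
  have htn0 := tn_nonneg n
  have htn1 := (tn_lt_one n).le
  have i1 : IntervalIntegrable (fun x => c x * X x * deriv X x) volume 0 (tn n) :=
    integrable_integrand hX h1 le_rfl htn0 htn1
  have i2 : IntervalIntegrable (fun x => c x * X x * deriv X x) volume (tn n) 1 :=
    integrable_integrand hX h1 htn0 htn1 le_rfl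
  have hsplit := intervalIntegral.integral_add_adjacent_intervals i1 i2
  have heq : Finfty X - Fn n X = ∫ x in (tn n)..1, c x * X x * deriv X x := by
    unfold Finfty Fn; linarith [hsplit]
  rw [heq]
  have habs : |∫ x in (tn n)..1, c x * X x * deriv X x|
      ≤ ∫ x in (tn n)..1, |c x * X x * deriv X x| :=
    intervalIntegral.abs_integral_le_integral_abs htn1
  have hg : IntervalIntegrable (fun x => 6 * (1 - x)) volume (tn n) 1 :=
    (Continuous.intervalIntegrable (by continuity) _ _)
  have hmono : (∫ x in (tn n)..1, |c x * X x * deriv X x|)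
      ≤ ∫ x in (tn n)..1, 6 * (1 - x) := by
    apply intervalIntegral.integral_mono_on htn1 i2.abs hg
    intro x hx
    exact bound_integrand hX h1 hx.2
  have hval : (∫ x in (tn n)..1, 6 * (1 - x)) = 3 * (2 : ℝ) ^ (-(2 * n : ℤ)) := by
    have hv : (∫ x in (tn n)..1, 6 * (1 - x))
        = 6 * ((1 - tn n) - (1 - tn n ^ 2) / 2) := by
      rw [intervalIntegral.integral_const_mul,
        intervalIntegral.integral_sub intervalIntegrable_const
          intervalIntegral.intervalIntegrable_id,
        intervalIntegral.integral_const, integral_id]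
      simp [smul_eq_mul]
    have h2 : (2 : ℝ) ^ (-(2 * n : ℤ)) = (1 / 2 ^ n) ^ 2 := by
      rw [show (-(2*(n:ℤ))) = ((-(n:ℤ))+(-(n:ℤ))) by ring, zpow_add₀ (two_ne_zero),
        zpow_neg, zpow_natCast]
      field_simp
    rw [hv, h2]
    unfold tn
    ring
  calc |∫ x in (tn n)..1, c x * X x * deriv X x|
      ≤ ∫ x in (tn n)..1, 6 * (1 - x) := le_trans habs hmono
  _ = 3 * (2 : ℝ) ^ (-(2 * n : ℤ)) := hval
open Topology

lemma slope_tendsto {f : ℝ → ℝ} {x d : ℝ} (h : HasDerivAt f d x) :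
    Tendsto (fun n : ℕ => ((n : ℝ) + 1) * (f (x + 1 / ((n : ℝ) + 1)) - f x)) atTop (𝓝 d) := by
  have hs := hasDerivAt_iff_tendsto_slope.mp h
  have hseq : Tendsto (fun n : ℕ => x + 1 / ((n : ℝ) + 1)) atTop (𝓝[≠] x) := by
    apply tendsto_nhdsWithin_of_tendsto_nhds_of_eventually_within
    · have h0 : Tendsto (fun n : ℕ => 1 / ((n : ℝ) + 1)) atTop (𝓝 0) :=
        tendsto_one_div_add_atTop_nhds_zero_nat
      simpa using tendsto_const_nhds.add h0
    · filter_upwards with n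
      have : (0:ℝ) < 1 / ((n : ℝ) + 1) := by positivity
      simp only [mem_compl_iff, mem_singleton_iff]
      intro hc
      nlinarith [hc]
  have := hs.comp hseq
  apply this.congr
  intro n
  have hne : ((n : ℝ) + 1) ≠ 0 := by positivity
  simp only [Function.comp_apply, slope_def_field, add_sub_cancel_left]
  field_simp

lemma key {X : ℝ → ℝ} (hX : LipschitzWith 1 X) {p q : ℝ} (hpq : p ≤ q) :
    ∫ x in p..q, X x * deriv X x = (X q ^ 2 - X p ^ 2) / 2 := by
  set g : ℝ → ℝ := fun x => X x ^ 2 with hg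
  have hXc : Continuous X := hX.continuous
  have hgc : Continuous g := hXc.pow 2
  set M : ℝ := |X 0| + |p| + |q| + 2 with hM
  have hXbound : ∀ y : ℝ, |y| ≤ |p| + |q| + 1 → |X y| ≤ M := by
    intro y hy
    have h2 := hX.dist_le_mul y 0
    simp only [Real.dist_eq, NNReal.coe_one, one_mul, sub_zero] at h2
    calc |X y| = |(X y - X 0) + X 0| := by ring_nf
    _ ≤ |X y - X 0| + |X 0| := abs_add_le _ _
    _ ≤ |y| + |X 0| := by linarith
    _ ≤ M := by rw [hM]; linarith
  set F : ℕ → ℝ → ℝ := fun n x => ((n : ℝ) + 1) / 2 * (g (x + 1 / ((n : ℝ) + 1)) - g x)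
    with hF
  -- a.e. pointwise convergence
  have hae : ∀ᵐ x : ℝ, Tendsto (fun n => F n x) atTop (𝓝 (X x * deriv X x)) := by
    filter_upwards [hX.ae_differentiableAt (μ := volume)] with x hx
    have hd : HasDerivAt X (deriv X x) x := hx.hasDerivAt
    have hg' : HasDerivAt g (2 * X x * deriv X x) x := by
      have := hd.fun_pow 2
      simpa [hg] using this
    have h2 := (slope_tendsto hg').div_const 2
    have h3 : (2 * X x * deriv X x) / 2 = X x * deriv X x := by ring
    rw [h3] at h2
    apply h2.congr
    intro n
    simp only [hF]
    ring
  -- uniform bound on Ioc p q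
  have hbound : ∀ n : ℕ, ∀ᵐ x ∂(volume.restrict (Ioc p q)), ‖F n x‖ ≤ M := by
    intro n
    filter_upwards [ae_restrict_mem measurableSet_Ioc] with x hx
    set h : ℝ := 1 / ((n : ℝ) + 1) with hh
    have hpos : 0 < h := by positivity
    have hle1 : h ≤ 1 := by
      rw [hh]; rw [div_le_one (by positivity)]; simp
    have hxb : |x| ≤ |p| + |q| := by
      rw [abs_le]
      constructor
      · linarith [neg_abs_le p, hx.1, abs_nonneg q]
      · linarith [le_abs_self q, hx.2, abs_nonneg p]
    have hxb2 : |x + h| ≤ |p| + |q| + 1 := by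
      calc |x + h| ≤ |x| + |h| := abs_add_le _ _
      _ ≤ (|p| + |q|) + 1 := by
          have : |h| = h := abs_of_pos hpos
          linarith
    have hb1 : |X (x + h) - X x| ≤ h := by
      have h2 := hX.dist_le_mul (x + h) x
      simp only [Real.dist_eq, NNReal.coe_one, one_mul, add_sub_cancel_left] at h2
      calc |X (x + h) - X x| ≤ |h| := h2
      _ = h := abs_of_pos hpos
    have hb2 : |X (x + h) + X x| ≤ 2 * M := by
      calc |X (x + h) + X x| ≤ |X (x + h)| + |X x| := abs_add_le _ _
      _ ≤ M + M := add_le_add (hXbound _ hxb2) (hXbound _ (by linarith))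
      _ = 2 * M := by ring
    have hdiff : g (x + h) - g x = (X (x + h) - X x) * (X (x + h) + X x) := by
      simp only [hg]; ring
    have hMpos : 0 ≤ M := le_trans (abs_nonneg (X x)) (hXbound _ (by linarith))
    calc ‖F n x‖ = (((n : ℝ) + 1) / 2) * |g (x + h) - g x| := by
          rw [Real.norm_eq_abs, abs_mul, abs_of_pos (by positivity)]
    _ = (((n : ℝ) + 1) / 2) * (|X (x + h) - X x| * |X (x + h) + X x|) := by
          rw [hdiff, abs_mul]
    _ ≤ (((n : ℝ) + 1) / 2) * (h * (2 * M)) := by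
          apply mul_le_mul_of_nonneg_left _ (by positivity)
          exact mul_le_mul hb1 hb2 (abs_nonneg _) (by linarith)
    _ = M := by
          rw [hh]
          field_simp
  -- integral of F n
  have hadj : ∀ a b d : ℝ, (∫ x in a..b, g x) + ∫ x in b..d, g x = ∫ x in a..d, g x :=
    fun a b d => intervalIntegral.integral_add_adjacent_intervals
      (hgc.intervalIntegrable _ _) (hgc.intervalIntegrable _ _)
  have hintFn : ∀ n : ℕ, (∫ x in p..q, F n x) = ((n : ℝ) + 1) / 2 *
      ((∫ x in q..(q + 1 / ((n : ℝ) + 1)), g x) - ∫ x in p..(p + 1 / ((n : ℝ) + 1)), g x) := by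
    intro n
    simp only [hF]
    rw [intervalIntegral.integral_const_mul]
    congr 1
    have hcomp : Continuous fun x : ℝ => g (x + 1 / ((n : ℝ) + 1)) :=
      hgc.comp (continuous_id.add continuous_const)
    rw [intervalIntegral.integral_sub (hcomp.intervalIntegrable _ _)
      (hgc.intervalIntegrable _ _),
      intervalIntegral.integral_comp_add_right g (1 / ((n : ℝ) + 1))]
    have e1 := hadj p (p + 1 / ((n : ℝ) + 1)) (q + 1 / ((n : ℝ) + 1))
    have e2 := hadj p q (q + 1 / ((n : ℝ) + 1))
    linarith
  -- limits of endpoint terms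
  have hend : ∀ a : ℝ, Tendsto
      (fun n : ℕ => ((n : ℝ) + 1) * ∫ x in a..(a + 1 / ((n : ℝ) + 1)), g x) atTop (𝓝 (g a)) := by
    intro a
    have hG : HasDerivAt (fun t => ∫ x in a..t, g x) (g a) a :=
      intervalIntegral.integral_hasDerivAt_right (hgc.intervalIntegrable _ _)
        hgc.stronglyMeasurable.stronglyMeasurableAtFilter hgc.continuousAt
    have := slope_tendsto hG
    apply this.congr
    intro n
    rw [intervalIntegral.integral_same, sub_zero]
  have hlim1 : Tendsto (fun n : ℕ => ∫ x in p..q, F n x) atTop (𝓝 ((g q - g p) / 2)) := by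
    have h2 := ((hend q).sub (hend p)).div_const 2
    apply h2.congr
    intro n
    rw [hintFn n]
    ring
  -- DCT
  have hFc : ∀ n : ℕ, Continuous (F n) := by
    intro n
    apply Continuous.mul continuous_const
    exact (hgc.comp (by continuity)).sub hgc
  have hDCT := MeasureTheory.tendsto_integral_of_dominated_convergence
    (μ := volume.restrict (Ioc p q)) (F := F) (f := fun x => X x * deriv X x)
    (fun _ => M) (fun n => (hFc n).aestronglyMeasurable) (integrable_const M)
    hbound (ae_restrict_of_ae hae)
  have hconv : ∀ (f : ℝ → ℝ), (∫ x in p..q, f x) = ∫ x in Ioc p q, f x :=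
    fun f => intervalIntegral.integral_of_le hpq
  have hlim2 : Tendsto (fun n : ℕ => ∫ x in p..q, F n x) atTop
      (𝓝 (∫ x in p..q, X x * deriv X x)) := by
    rw [← hconv (fun x => X x * deriv X x)] at hDCT
    exact hDCT.congr fun n => (hconv (F n)).symm
  exact tendsto_nhds_unique hlim2 hlim1
lemma ae_ne_real (s : ℝ) : ∀ᵐ x : ℝ, x ≠ s := by
  rw [ae_iff]
  simp only [ne_eq, not_not, setOf_eq_eq_singleton]
  exact measure_singleton _

lemma seg1 {X : ℝ → ℝ} (hX : LipschitzWith 1 X) (m : ℕ) :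
    (∫ x in (tn m)..(sn m), c x * X x * deriv X x) = (X (sn m) ^ 2 - X (tn m) ^ 2) / 2 := by
  have hae : ∀ᵐ x : ℝ, x ∈ uIoc (tn m) (sn m) → c x * X x * deriv X x = X x * deriv X x := by
    filter_upwards [ae_ne_real (sn m)] with x hxne hx
    rw [uIoc_of_le (tn_lt_sn m).le] at hx
    rw [c_eq_one ⟨hx.1.le, lt_of_le_of_ne hx.2 hxne⟩, one_mul]
  rw [intervalIntegral.integral_congr_ae hae]
  exact key hX (tn_lt_sn m).le

lemma seg2 {X : ℝ → ℝ} (hX : LipschitzWith 1 X) (m : ℕ) :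
    (∫ x in (sn m)..(tn (m + 1)), c x * X x * deriv X x)
      = 6 * ((X (tn (m + 1)) ^ 2 - X (sn m) ^ 2) / 2) := by
  have hae : ∀ᵐ x : ℝ, x ∈ uIoc (sn m) (tn (m + 1)) →
      c x * X x * deriv X x = 6 * (X x * deriv X x) := by
    filter_upwards [ae_ne_real (tn (m + 1))] with x hxne hx
    rw [uIoc_of_le (sn_lt_tn m).le] at hx
    rw [c_eq_six ⟨hx.1.le, lt_of_le_of_ne hx.2 hxne⟩]
    ring
  rw [intervalIntegral.integral_congr_ae hae, intervalIntegral.integral_const_mul,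
    key hX (sn_lt_tn m).le]

lemma FnEq {X : ℝ → ℝ} (hX : LipschitzWith 1 X) (h1 : X 1 = 0) (n : ℕ) :
    Fn n X = ∑ m ∈ Finset.range n,
      ((X (sn m) ^ 2 - X (tn m) ^ 2) / 2 + 6 * ((X (tn (m + 1)) ^ 2 - X (sn m) ^ 2) / 2)) := by
  induction n with
  | zero =>
    unfold Fn
    rw [tn_zero]
    simp
  | succ n ih =>
    have h0 := tn_nonneg n
    have hsn0 : 0 ≤ sn n := le_trans h0 (tn_lt_sn n).le
    have hs1 : sn n ≤ 1 := le_trans (sn_lt_tn n).le (tn_lt_one _).le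
    have ht1 : tn (n + 1) ≤ 1 := (tn_lt_one _).le
    have i01 := integrable_integrand hX h1 le_rfl h0 (tn_lt_one n).le
    have i1s := integrable_integrand hX h1 h0 (tn_lt_sn n).le hs1
    have is2 := integrable_integrand hX h1 hsn0 (sn_lt_tn n).le ht1
    have hsplit2 := intervalIntegral.integral_add_adjacent_intervals i1s is2
    have hsplit1 := intervalIntegral.integral_add_adjacent_intervals i01 (i1s.trans is2)
    have : Fn (n + 1) X = Fn n X
        + ((∫ x in (tn n)..(sn n), c x * X x * deriv X x)
          + ∫ x in (sn n)..(tn (n + 1)), c x * X x * deriv X x) := by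
      unfold Fn
      rw [hsplit2, hsplit1]
    rw [this, ih, seg1 hX n, seg2 hX n, Finset.sum_range_succ]

lemma two_zpow_sq (n : ℕ) : (2 : ℝ) ^ (-(2 * n : ℤ)) = (1 / 2 ^ n) ^ 2 := by
  rw [show (-(2 * (n : ℤ))) = ((-(n : ℤ)) + (-(n : ℤ))) by ring, zpow_add₀ (two_ne_zero),
    zpow_neg, zpow_natCast]
  field_simp

theorem stmt11 :
    (∃ C : ℝ, ∀ X : ℝ → ℝ, LipschitzWith 1 X → X 1 = 0 → ∀ n : ℕ,
      |Finfty X - Fn n X| ≤ C * (2 : ℝ) ^ (-(2 * n : ℤ))) ∧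
    (∀ X : ℝ → ℝ, LipschitzWith 1 X → X 1 = 0 →
      ∀ Xk : ℕ → ℝ → ℝ, (∀ k, LipschitzWith 1 (Xk k) ∧ Xk k 1 = 0) →
        TendstoUniformly Xk X atTop →
        Tendsto (fun k => Finfty (Xk k)) atTop (nhds (Finfty X))) := by
  constructor
  · exact ⟨3, fun X hX h1 n => part1 hX h1 n⟩
  · intro X hX h1 Xk hXk hUnif
    rw [Metric.tendsto_atTop]
    intro ε hε
    -- choose n
    obtain ⟨n, hn⟩ := exists_pow_lt_of_lt_one (show (0:ℝ) < ε / 9 by linarith)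
      (by norm_num : (1:ℝ) / 2 < 1)
    have hsmall : 3 * (2 : ℝ) ^ (-(2 * n : ℤ)) ≤ ε / 3 := by
      have h2 : ((1:ℝ) / 2) ^ n = 1 / 2 ^ n := by rw [div_pow, one_pow]
      have h3 : (0:ℝ) < 1 / 2 ^ n := by positivity
      have h4 : (1:ℝ) / 2 ^ n ≤ 1 := by
        rw [div_le_one (by positivity)]
        exact one_le_pow₀ (by norm_num)
      rw [two_zpow_sq]
      nlinarith [hn, h2]
    -- Fn continuity
    have hpt : ∀ t : ℝ, Tendsto (fun k => Xk k t) atTop (𝓝 (X t)) :=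
      fun t => hUnif.tendsto_at t
    have hFn : Tendsto (fun k => Fn n (Xk k)) atTop (𝓝 (Fn n X)) := by
      rw [FnEq hX h1]
      refine Tendsto.congr (fun k => (FnEq (hXk k).1 (hXk k).2 n).symm) ?_
      apply tendsto_finset_sum
      intro m _
      have hs := hpt (sn m)
      have ht := hpt (tn m)
      have ht1 := hpt (tn (m + 1))
      exact (((hs.pow 2).sub (ht.pow 2)).div_const 2).add
        ((((ht1.pow 2).sub (hs.pow 2)).div_const 2).const_mul 6)
    obtain ⟨N, hN⟩ := Metric.tendsto_atTop.mp hFn (ε / 3) (by linarith)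
    refine ⟨N, fun k hk => ?_⟩
    have hb1 := part1 (hXk k).1 (hXk k).2 n
    have hb2 := part1 hX h1 n
    have hd := hN k hk
    rw [Real.dist_eq] at hd ⊢
    have htri : |Finfty (Xk k) - Finfty X| ≤ |Finfty (Xk k) - Fn n (Xk k)|
        + |Fn n (Xk k) - Fn n X| + |Fn n X - Finfty X| := by
      have := abs_sub_le (Finfty (Xk k)) (Fn n (Xk k)) (Finfty X)
      have := abs_sub_le (Fn n (Xk k)) (Fn n X) (Finfty X)
      calc |Finfty (Xk k) - Finfty X|
          ≤ |Finfty (Xk k) - Fn n (Xk k)| + |Fn n (Xk k) - Finfty X| :=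
            abs_sub_le _ _ _
      _ ≤ |Finfty (Xk k) - Fn n (Xk k)| + (|Fn n (Xk k) - Fn n X| + |Fn n X - Finfty X|) := by
            linarith [abs_sub_le (Fn n (Xk k)) (Fn n X) (Finfty X)]
      _ = _ := by ring
    have hb2' : |Fn n X - Finfty X| ≤ 3 * (2 : ℝ) ^ (-(2 * n : ℤ)) := by
      rw [abs_sub_comm]; exact hb2
    calc |Finfty (Xk k) - Finfty X| ≤ |Finfty (Xk k) - Fn n (Xk k)|
        + |Fn n (Xk k) - Fn n X| + |Fn n X - Finfty X| := htri
    _ < ε / 3 + ε / 3 + ε / 3 := by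
        apply add_lt_add_of_lt_of_le (add_lt_add_of_le_of_lt (le_trans hb1 hsmall) hd)
          (le_trans hb2' hsmall)
    _ = ε := by ring
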